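/- Combining the previous two facts: if U − (X,S) − Y is a Markov chain, then I(U;Y) − I(U;S) ≤ I(X;Y|S). Hence the Costa game utility is upper bounded by the Side Information game utility for every pair of user and jammer strategies. -/

import Mathlib

open MeasureTheory ProbabilityTheory

variable {Ω : Type*} [MeasureSpace Ω]

/-- Shannon entropy of a finitely-valued random variable. -/
noncomputable def shEnt {α : Type*} [MeasurableSpace α] [Fintype α] (X : Ω → α) : ℝ :=
  ∑ x : α, Real.negMulLog ((Measure.map X ℙ {x}).toReal)

/-- Mutual information `I(X;Y) = H(X) + H(Y) - H(X,Y)` of finitely-valued random variables. -/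
noncomputable def shMutualInfo {α β : Type*} [MeasurableSpace α] [Fintype α]
    [MeasurableSpace β] [Fintype β] (X : Ω → α) (Y : Ω → β) : ℝ :=
  shEnt X + shEnt Y - shEnt (fun ω => (X ω, Y ω))

/-- Conditional mutual information
`I(X;Y|S) = H(X,S) + H(Y,S) - H(S) - H(X,Y,S)` of finitely-valued random variables. -/
noncomputable def shCondMutualInfo {α β γ : Type*} [MeasurableSpace α] [Fintype α]
    [MeasurableSpace β] [Fintype β] [MeasurableSpace γ] [Fintype γ]
    (X : Ω → α) (Y : Ω → β) (S : Ω → γ) : ℝ :=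
  shEnt (fun ω => (X ω, S ω)) + shEnt (fun ω => (Y ω, S ω)) - shEnt S
    - shEnt (fun ω => (X ω, Y ω, S ω))


section Aux
open Real Finset
set_option linter.unusedSectionVars false

private lemma key_ineq {t qa qb qc : ℝ} (ht : 0 ≤ t) (ha0 : 0 ≤ qa) (hb0 : 0 ≤ qb)
    (ha : t ≤ qa) (hb : t ≤ qb) (hc : t ≤ qc) :
    t * (log qa + log qb - log qc - log t) ≤ qa * qb / qc - t := by
  have hc0 : 0 ≤ qc := ht.trans hc
  rcases ht.eq_or_lt with h0 | hpos
  · simp only [← h0, zero_mul, sub_zero]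
    positivity
  · have hqa : 0 < qa := lt_of_lt_of_le hpos ha
    have hqb : 0 < qb := lt_of_lt_of_le hpos hb
    have hqc : 0 < qc := lt_of_lt_of_le hpos hc
    have hr : 0 < qa * qb / qc := by positivity
    have hlog : log qa + log qb - log qc - log t = log ((qa * qb / qc) / t) := by
      rw [Real.log_div hr.ne' hpos.ne', Real.log_div (by positivity) hqc.ne',
        Real.log_mul hqa.ne' hqb.ne']
    rw [hlog]
    calc t * log ((qa * qb / qc) / t) ≤ t * ((qa * qb / qc) / t - 1) :=
          mul_le_mul_of_nonneg_left (Real.log_le_sub_one_of_pos (by positivity)) ht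
      _ = qa * qb / qc - t := by
          rw [mul_sub, mul_one, mul_div_cancel₀ _ hpos.ne']

private lemma key_eq {t qa qb qc : ℝ} (ht : 0 ≤ t)
    (ha : t ≤ qa) (hb : t ≤ qb) (hc : t ≤ qc) (hM : t * qc = qa * qb) :
    t * (log qa + log qb - log qc - log t) = 0 := by
  rcases ht.eq_or_lt with h0 | hpos
  · rw [← h0, zero_mul]
  · have hqa : 0 < qa := lt_of_lt_of_le hpos ha
    have hqb : 0 < qb := lt_of_lt_of_le hpos hb
    have hqc : 0 < qc := lt_of_lt_of_le hpos hc
    have : log qa + log qb = log qc + log t := by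
      rw [← Real.log_mul hqa.ne' hqb.ne', ← hM, Real.log_mul hpos.ne' hqc.ne', add_comm]
    rw [this]; ring

section Abstract

variable {A B C : Type*} [Fintype A] [Fintype B] [Fintype C]

private lemma expand_HAC (p : A → B → C → ℝ) :
    ∑ a, ∑ c, Real.negMulLog (∑ b, p a b c)
      = ∑ a, ∑ b, ∑ c, p a b c * (-(log (∑ b', p a b' c))) :=
  Finset.sum_congr rfl fun a _ =>
    calc ∑ c, Real.negMulLog (∑ b, p a b c)
        = ∑ c, ∑ b, p a b c * (-(log (∑ b', p a b' c))) := by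
          refine Finset.sum_congr rfl fun c _ => ?_
          rw [Real.negMulLog]; simp only [← Finset.sum_mul]; ring
      _ = ∑ b, ∑ c, p a b c * (-(log (∑ b', p a b' c))) := Finset.sum_comm

private lemma expand_HBC (p : A → B → C → ℝ) :
    ∑ b, ∑ c, Real.negMulLog (∑ a, p a b c)
      = ∑ a, ∑ b, ∑ c, p a b c * (-(log (∑ a', p a' b c))) :=
  calc ∑ b, ∑ c, Real.negMulLog (∑ a, p a b c)
      = ∑ b, ∑ c, ∑ a, p a b c * (-(log (∑ a', p a' b c))) := by
        refine Finset.sum_congr rfl fun b _ => Finset.sum_congr rfl fun c _ => ?_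
        rw [Real.negMulLog]; simp only [← Finset.sum_mul]; ring
    _ = ∑ b, ∑ a, ∑ c, p a b c * (-(log (∑ a', p a' b c))) :=
        Finset.sum_congr rfl fun b _ => Finset.sum_comm
    _ = ∑ a, ∑ b, ∑ c, p a b c * (-(log (∑ a', p a' b c))) := Finset.sum_comm

private lemma expand_HC (p : A → B → C → ℝ) :
    ∑ c, Real.negMulLog (∑ a, ∑ b, p a b c)
      = ∑ a, ∑ b, ∑ c, p a b c * (-(log (∑ a', ∑ b', p a' b' c))) :=
  calc ∑ c, Real.negMulLog (∑ a, ∑ b, p a b c)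
      = ∑ c, ∑ a, ∑ b, p a b c * (-(log (∑ a', ∑ b', p a' b' c))) := by
        refine Finset.sum_congr rfl fun c _ => ?_
        rw [Real.negMulLog]; simp only [← Finset.sum_mul]; ring
    _ = ∑ a, ∑ c, ∑ b, p a b c * (-(log (∑ a', ∑ b', p a' b' c))) := Finset.sum_comm
    _ = ∑ a, ∑ b, ∑ c, p a b c * (-(log (∑ a', ∑ b', p a' b' c))) :=
        Finset.sum_congr rfl fun a _ => Finset.sum_comm

private lemma expand_HABC (p : A → B → C → ℝ) :
    ∑ a, ∑ b, ∑ c, Real.negMulLog (p a b c)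
      = ∑ a, ∑ b, ∑ c, p a b c * (-(log (p a b c))) :=
  Finset.sum_congr rfl fun a _ => Finset.sum_congr rfl fun b _ =>
    Finset.sum_congr rfl fun c _ => by rw [Real.negMulLog]; ring

end Abstract

section Abstract2

variable {A B C : Type*} [Fintype A] [Fintype B] [Fintype C]

private lemma cmi_nonneg (p : A → B → C → ℝ) (hp : ∀ a b c, 0 ≤ p a b c) :
    ∑ c, Real.negMulLog (∑ a, ∑ b, p a b c) + ∑ a, ∑ b, ∑ c, Real.negMulLog (p a b c)
      ≤ ∑ a, ∑ c, Real.negMulLog (∑ b, p a b c)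
        + ∑ b, ∑ c, Real.negMulLog (∑ a, p a b c) := by
  rw [expand_HAC, expand_HBC, expand_HC, expand_HABC]
  rw [← sub_nonneg]
  have hrw : ∑ a, ∑ b, ∑ c, p a b c * (-(log (∑ b', p a b' c)))
      + ∑ a, ∑ b, ∑ c, p a b c * (-(log (∑ a', p a' b c)))
      - (∑ a, ∑ b, ∑ c, p a b c * (-(log (∑ a', ∑ b', p a' b' c)))
        + ∑ a, ∑ b, ∑ c, p a b c * (-(log (p a b c))))
      = ∑ a, ∑ b, ∑ c, (-(p a b c * (log (∑ b', p a b' c) + log (∑ a', p a' b c)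
          - log (∑ a', ∑ b', p a' b' c) - log (p a b c)))) := by
    rw [← Finset.sum_add_distrib, ← Finset.sum_add_distrib, ← Finset.sum_sub_distrib]
    refine Finset.sum_congr rfl fun a _ => ?_
    rw [← Finset.sum_add_distrib, ← Finset.sum_add_distrib, ← Finset.sum_sub_distrib]
    refine Finset.sum_congr rfl fun b _ => ?_
    rw [← Finset.sum_add_distrib, ← Finset.sum_add_distrib, ← Finset.sum_sub_distrib]
    exact Finset.sum_congr rfl fun c _ => by ring
  rw [hrw]
  simp only [Finset.sum_neg_distrib]
  rw [neg_nonneg]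
  -- now show  ∑ a b c, term ≤ 0
  have hbound : ∀ a b c, p a b c * (log (∑ b', p a b' c) + log (∑ a', p a' b c)
        - log (∑ a', ∑ b', p a' b' c) - log (p a b c))
      ≤ (∑ b', p a b' c) * (∑ a', p a' b c) / (∑ a', ∑ b', p a' b' c) - p a b c := by
    intro a b c
    refine key_ineq (hp a b c) (Finset.sum_nonneg fun b' _ => hp a b' c)
      (Finset.sum_nonneg fun a' _ => hp a' b c)
      (Finset.single_le_sum (fun b' _ => hp a b' c) (Finset.mem_univ b))
      (Finset.single_le_sum (fun a' _ => hp a' b c) (Finset.mem_univ a)) ?_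
    calc p a b c ≤ ∑ b', p a b' c :=
          Finset.single_le_sum (fun b' _ => hp a b' c) (Finset.mem_univ b)
      _ ≤ ∑ a', ∑ b', p a' b' c :=
          Finset.single_le_sum (fun a' _ => Finset.sum_nonneg fun b' _ => hp a' b' c)
            (Finset.mem_univ a)
  calc ∑ a, ∑ b, ∑ c, p a b c * (log (∑ b', p a b' c) + log (∑ a', p a' b c)
          - log (∑ a', ∑ b', p a' b' c) - log (p a b c))
      ≤ ∑ a, ∑ b, ∑ c, ((∑ b', p a b' c) * (∑ a', p a' b c)
          / (∑ a', ∑ b', p a' b' c) - p a b c) :=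
        Finset.sum_le_sum fun a _ => Finset.sum_le_sum fun b _ =>
          Finset.sum_le_sum fun c _ => hbound a b c
    _ = ∑ a, ∑ c, ∑ b, ((∑ b', p a b' c) * (∑ a', p a' b c)
          / (∑ a', ∑ b', p a' b' c) - p a b c) :=
        Finset.sum_congr rfl fun a _ => Finset.sum_comm
    _ = ∑ c, ∑ a, ∑ b, ((∑ b', p a b' c) * (∑ a', p a' b c)
          / (∑ a', ∑ b', p a' b' c) - p a b c) := Finset.sum_comm
    _ ≤ 0 := by
        refine Finset.sum_nonpos fun c _ => ?_
        have hQ : (0:ℝ) ≤ ∑ a', ∑ b', p a' b' c :=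
          Finset.sum_nonneg fun a' _ => Finset.sum_nonneg fun b' _ => hp a' b' c
        calc ∑ a, ∑ b, ((∑ b', p a b' c) * (∑ a', p a' b c)
              / (∑ a', ∑ b', p a' b' c) - p a b c)
            = (∑ a, ∑ b', p a b' c) * (∑ b, ∑ a', p a' b c)
                / (∑ a', ∑ b', p a' b' c) - ∑ a, ∑ b, p a b c := by
              simp only [Finset.sum_sub_distrib]
              congr 1
              have h1 : ∀ a : A, ∑ b, (∑ b', p a b' c) * (∑ a', p a' b c)
                    / (∑ a', ∑ b', p a' b' c)
                  = (∑ b', p a b' c) * (∑ b, ∑ a', p a' b c)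
                    / (∑ a', ∑ b', p a' b' c) := fun a => by
                rw [← Finset.sum_div, ← Finset.mul_sum]
              simp only [h1]
              rw [← Finset.sum_div, ← Finset.sum_mul]
          _ ≤ 0 := by
              have h2 : ∑ b, ∑ a', p a' b c = ∑ a', ∑ b', p a' b' c := Finset.sum_comm
              rw [h2]
              rcases hQ.eq_or_lt with h0 | hposQ
              · rw [← h0]; simp
              · rw [mul_div_assoc, div_self hposQ.ne', mul_one]
                simp

end Abstract2

section Abstract3

variable {A B C : Type*} [Fintype A] [Fintype B] [Fintype C]

private lemma cmi_eq_zero (p : A → B → C → ℝ) (hp : ∀ a b c, 0 ≤ p a b c)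
    (hM : ∀ a b c, p a b c * (∑ a', ∑ b', p a' b' c)
      = (∑ b', p a b' c) * (∑ a', p a' b c)) :
    ∑ a, ∑ c, Real.negMulLog (∑ b, p a b c) + ∑ b, ∑ c, Real.negMulLog (∑ a, p a b c)
      = ∑ c, Real.negMulLog (∑ a, ∑ b, p a b c)
        + ∑ a, ∑ b, ∑ c, Real.negMulLog (p a b c) := by
  rw [expand_HAC, expand_HBC, expand_HC, expand_HABC]
  rw [← sub_eq_zero]
  have hrw : ∑ a, ∑ b, ∑ c, p a b c * (-(Real.log (∑ b', p a b' c)))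
      + ∑ a, ∑ b, ∑ c, p a b c * (-(Real.log (∑ a', p a' b c)))
      - (∑ a, ∑ b, ∑ c, p a b c * (-(Real.log (∑ a', ∑ b', p a' b' c)))
        + ∑ a, ∑ b, ∑ c, p a b c * (-(Real.log (p a b c))))
      = ∑ a, ∑ b, ∑ c, (-(p a b c * (Real.log (∑ b', p a b' c) + Real.log (∑ a', p a' b c)
          - Real.log (∑ a', ∑ b', p a' b' c) - Real.log (p a b c)))) := by
    rw [← Finset.sum_add_distrib, ← Finset.sum_add_distrib, ← Finset.sum_sub_distrib]
    refine Finset.sum_congr rfl fun a _ => ?_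
    rw [← Finset.sum_add_distrib, ← Finset.sum_add_distrib, ← Finset.sum_sub_distrib]
    refine Finset.sum_congr rfl fun b _ => ?_
    rw [← Finset.sum_add_distrib, ← Finset.sum_add_distrib, ← Finset.sum_sub_distrib]
    exact Finset.sum_congr rfl fun c _ => by ring
  rw [hrw]
  refine Finset.sum_eq_zero fun a _ => Finset.sum_eq_zero fun b _ =>
    Finset.sum_eq_zero fun c _ => ?_
  rw [neg_eq_zero]
  refine key_eq (hp a b c)
    (Finset.single_le_sum (fun b' _ => hp a b' c) (Finset.mem_univ b))
    (Finset.single_le_sum (fun a' _ => hp a' b c) (Finset.mem_univ a)) ?_ (hM a b c)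
  calc p a b c ≤ ∑ b', p a b' c :=
        Finset.single_le_sum (fun b' _ => hp a b' c) (Finset.mem_univ b)
    _ ≤ ∑ a', ∑ b', p a' b' c :=
        Finset.single_le_sum (fun a' _ => Finset.sum_nonneg fun b' _ => hp a' b' c)
          (Finset.mem_univ a)

end Abstract3

section Fiber

variable {ι A B C : Type*} [Fintype ι] [Fintype A] [Fintype B] [Fintype C]
  [DecidableEq A] [DecidableEq B] [DecidableEq C]

/-- entropy of the push-forward of the mass function `q` under `k`. -/
private noncomputable def fent {δ : Type*} [Fintype δ] [DecidableEq δ]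
    (q : ι → ℝ) (k : ι → δ) : ℝ :=
  ∑ d, Real.negMulLog (∑ i, if k i = d then q i else 0)

private lemma fent_comp_inj {δ ε : Type*} [Fintype δ] [DecidableEq δ] [Fintype ε]
    [DecidableEq ε] (q : ι → ℝ) (k : ι → δ) (σ : δ → ε) (hσ : Function.Injective σ) :
    fent q (fun i => σ (k i)) = fent q k := by
  unfold fent
  calc ∑ e, Real.negMulLog (∑ i, if σ (k i) = e then q i else 0)
      = ∑ e ∈ Finset.univ.image σ, Real.negMulLog (∑ i, if σ (k i) = e then q i else 0) := by
        refine (Finset.sum_subset (Finset.subset_univ _) fun e _ he => ?_).symm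
        have : (∑ i, if σ (k i) = e then q i else 0) = 0 :=
          Finset.sum_eq_zero fun i _ => if_neg fun h =>
            he (Finset.mem_image.mpr ⟨k i, Finset.mem_univ _, h⟩)
        rw [this, Real.negMulLog_zero]
    _ = ∑ d, Real.negMulLog (∑ i, if σ (k i) = σ d then q i else 0) :=
        Finset.sum_image fun x _ y _ h => hσ h
    _ = ∑ d, Real.negMulLog (∑ i, if k i = d then q i else 0) := by
        refine Finset.sum_congr rfl fun d _ => congrArg Real.negMulLog ?_
        exact Finset.sum_congr rfl fun i _ => by simp [hσ.eq_iff]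

variable (q : ι → ℝ) (f : ι → A) (g : ι → B) (h : ι → C)

private lemma collapse2 : ∀ a c, ∑ b, ∑ i, (if f i = a ∧ g i = b ∧ h i = c then q i else 0)
    = ∑ i, if f i = a ∧ h i = c then q i else 0 := by
  intro a c
  rw [Finset.sum_comm]
  refine Finset.sum_congr rfl fun i _ => ?_
  by_cases h1 : f i = a <;> by_cases h2 : h i = c <;> simp [h1, h2]

private lemma collapse3 : ∀ b c, ∑ a, ∑ i, (if f i = a ∧ g i = b ∧ h i = c then q i else 0)
    = ∑ i, if g i = b ∧ h i = c then q i else 0 := by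
  intro b c
  rw [Finset.sum_comm]
  refine Finset.sum_congr rfl fun i _ => ?_
  by_cases h2 : g i = b <;> by_cases h3 : h i = c <;> simp [h2, h3]

private lemma collapse4 : ∀ c, ∑ a, ∑ b, ∑ i, (if f i = a ∧ g i = b ∧ h i = c then q i else 0)
    = ∑ i, if h i = c then q i else 0 := by
  intro c
  calc ∑ a, ∑ b, ∑ i, (if f i = a ∧ g i = b ∧ h i = c then q i else 0)
      = ∑ a, ∑ i, (if f i = a ∧ h i = c then q i else 0) :=
        Finset.sum_congr rfl fun a _ => collapse2 q f g h a c
    _ = ∑ i, ∑ a, (if f i = a ∧ h i = c then q i else 0) := Finset.sum_comm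
    _ = ∑ i, if h i = c then q i else 0 := by
        refine Finset.sum_congr rfl fun i _ => ?_
        by_cases h2 : h i = c <;> simp [h2]

private lemma fent_triple : fent q (fun i => (f i, g i, h i))
    = ∑ a, ∑ b, ∑ c, Real.negMulLog (∑ i, if f i = a ∧ g i = b ∧ h i = c then q i else 0) := by
  unfold fent
  simp only [Fintype.sum_prod_type, Prod.mk.injEq]

private lemma fent_fh : fent q (fun i => (f i, h i))
    = ∑ a, ∑ c, Real.negMulLog (∑ b, ∑ i, if f i = a ∧ g i = b ∧ h i = c then q i else 0) := by
  unfold fent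
  simp only [Fintype.sum_prod_type, Prod.mk.injEq]
  exact Finset.sum_congr rfl fun a _ => Finset.sum_congr rfl fun c _ =>
    congrArg Real.negMulLog (collapse2 q f g h a c).symm

private lemma fent_gh : fent q (fun i => (g i, h i))
    = ∑ b, ∑ c, Real.negMulLog (∑ a, ∑ i, if f i = a ∧ g i = b ∧ h i = c then q i else 0) := by
  unfold fent
  simp only [Fintype.sum_prod_type, Prod.mk.injEq]
  exact Finset.sum_congr rfl fun b _ => Finset.sum_congr rfl fun c _ =>
    congrArg Real.negMulLog (collapse3 q f g h b c).symm

private lemma fent_h : fent q h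
    = ∑ c, Real.negMulLog (∑ a, ∑ b, ∑ i, if f i = a ∧ g i = b ∧ h i = c then q i else 0) := by
  unfold fent
  exact Finset.sum_congr rfl fun c _ =>
    congrArg Real.negMulLog (collapse4 q f g h c).symm

end Fiber

section FiberCMI

variable {ι A B C : Type*} [Fintype ι] [Fintype A] [Fintype B] [Fintype C]
  [DecidableEq A] [DecidableEq B] [DecidableEq C]

private lemma cmi_nonneg' (q : ι → ℝ) (hq : ∀ i, 0 ≤ q i)
    (f : ι → A) (g : ι → B) (h : ι → C) :
    fent q h + fent q (fun i => (f i, g i, h i))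
      ≤ fent q (fun i => (f i, h i)) + fent q (fun i => (g i, h i)) := by
  rw [fent_h q f g h, fent_triple q f g h, fent_fh q f g h, fent_gh q f g h]
  exact cmi_nonneg (fun a b c => ∑ i, if f i = a ∧ g i = b ∧ h i = c then q i else 0)
    (fun a b c => Finset.sum_nonneg fun i _ => by split <;> simp [hq i])

private lemma cmi_eq_zero' (q : ι → ℝ) (hq : ∀ i, 0 ≤ q i)
    (f : ι → A) (g : ι → B) (h : ι → C)
    (hM : ∀ a b c, (∑ i, if f i = a ∧ g i = b ∧ h i = c then q i else 0)
        * (∑ i, if h i = c then q i else 0)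
      = (∑ i, if f i = a ∧ h i = c then q i else 0)
        * (∑ i, if g i = b ∧ h i = c then q i else 0)) :
    fent q (fun i => (f i, h i)) + fent q (fun i => (g i, h i))
      = fent q h + fent q (fun i => (f i, g i, h i)) := by
  rw [fent_h q f g h, fent_triple q f g h, fent_fh q f g h, fent_gh q f g h]
  refine cmi_eq_zero (fun a b c => ∑ i, if f i = a ∧ g i = b ∧ h i = c then q i else 0)
    (fun a b c => Finset.sum_nonneg fun i _ => by split <;> simp [hq i]) ?_
  intro a b c
  rw [collapse4 q f g h c, collapse2 q f g h a c, collapse3 q f g h b c]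
  exact hM a b c

end FiberCMI

section Bridge

private lemma preim_sum {ι : Type*} [MeasurableSpace ι] [MeasurableSingletonClass ι]
    [IsProbabilityMeasure (ℙ : Measure Ω)]
    (Z : Ω → ι) (hZ : Measurable Z) (s : Finset ι) :
    (ℙ (Z ⁻¹' ↑s)).toReal = ∑ i ∈ s, (ℙ (Z ⁻¹' {i})).toReal := by
  rw [← ENNReal.toReal_sum (fun i _ => measure_ne_top _ _)]
  congr 1
  have h1 : Z ⁻¹' ↑s = ⋃ i ∈ s, Z ⁻¹' {i} := by ext ω; simp
  rw [h1]
  exact measure_biUnion_finset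
    (fun i _ j _ hij => (Set.disjoint_singleton.mpr hij).preimage Z)
    (fun i _ => hZ (measurableSet_singleton i))

private lemma preim_prop_sum {ι : Type*} [MeasurableSpace ι] [MeasurableSingletonClass ι]
    [Fintype ι] [IsProbabilityMeasure (ℙ : Measure Ω)]
    (Z : Ω → ι) (hZ : Measurable Z) (P : ι → Prop) [DecidablePred P] :
    (ℙ (Z ⁻¹' {i | P i})).toReal = ∑ i, if P i then (ℙ (Z ⁻¹' {i})).toReal else 0 := by
  rw [← Finset.sum_filter]
  have h1 : {i | P i} = ↑(Finset.univ.filter P) := by ext i; simp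
  rw [h1, preim_sum Z hZ]

private lemma shEnt_eq_fent {ι δ : Type*} [MeasurableSpace ι] [MeasurableSingletonClass ι]
    [Fintype ι] [MeasurableSpace δ] [MeasurableSingletonClass δ] [Fintype δ] [DecidableEq δ]
    [IsProbabilityMeasure (ℙ : Measure Ω)]
    (Z : Ω → ι) (hZ : Measurable Z) (k : ι → δ) :
    shEnt (fun ω => k (Z ω)) = fent (fun i => (ℙ (Z ⁻¹' {i})).toReal) k := by
  unfold shEnt fent
  refine Finset.sum_congr rfl fun d _ => congrArg Real.negMulLog ?_
  rw [Measure.map_apply (f := fun ω => k (Z ω)) ((measurable_of_countable k).comp hZ) (measurableSet_singleton d)]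
  exact preim_prop_sum Z hZ (fun i => k i = d)

end Bridge

end Aux

theorem costa_utility_le_si_utility
    [IsProbabilityMeasure (ℙ : Measure Ω)]
    {α β γ χ : Type*} [MeasurableSpace α] [Fintype α] [MeasurableSingletonClass α]
    [MeasurableSpace β] [Fintype β] [MeasurableSingletonClass β]
    [MeasurableSpace γ] [Fintype γ] [MeasurableSingletonClass γ]
    [MeasurableSpace χ] [Fintype χ] [MeasurableSingletonClass χ]
    (U : Ω → α) (X : Ω → χ) (S : Ω → γ) (Y : Ω → β)
    (hU : Measurable U) (hX : Measurable X) (hS : Measurable S) (hY : Measurable Y)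
    -- Markov chain `U - (X,S) - Y`: conditional independence of `U` and `Y` given `(X,S)`.
    (hMarkov : ∀ (u : α) (x : χ) (s : γ) (y : β),
      (ℙ {ω | U ω = u ∧ X ω = x ∧ S ω = s ∧ Y ω = y}).toReal
          * (ℙ {ω | X ω = x ∧ S ω = s}).toReal
        = (ℙ {ω | U ω = u ∧ X ω = x ∧ S ω = s}).toReal
          * (ℙ {ω | Y ω = y ∧ X ω = x ∧ S ω = s}).toReal) :
    shMutualInfo U Y - shMutualInfo U S ≤ shCondMutualInfo X Y S := by
  classical
  have hWm : Measurable fun ω => (U ω, X ω, S ω, Y ω) :=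
    hU.prodMk (hX.prodMk (hS.prodMk hY))
  set q : (α × χ × γ × β) → ℝ :=
    fun w => (ℙ ((fun ω => (U ω, X ω, S ω, Y ω)) ⁻¹' {w})).toReal with hqdef
  -- conversions of the entropies occurring in the goal
  have HU : shEnt U = fent q (fun w : α × χ × γ × β => w.1) := by
    rw [hqdef]; exact shEnt_eq_fent (fun ω => (U ω, X ω, S ω, Y ω)) hWm (fun w => w.1)
  have HY : shEnt Y = fent q (fun w : α × χ × γ × β => w.2.2.2) := by
    rw [hqdef]; exact shEnt_eq_fent (fun ω => (U ω, X ω, S ω, Y ω)) hWm (fun w => w.2.2.2)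
  have HS : shEnt S = fent q (fun w : α × χ × γ × β => w.2.2.1) := by
    rw [hqdef]; exact shEnt_eq_fent (fun ω => (U ω, X ω, S ω, Y ω)) hWm (fun w => w.2.2.1)
  have HUY : shEnt (fun ω => (U ω, Y ω)) = fent q (fun w : α × χ × γ × β => (w.1, w.2.2.2)) := by
    rw [hqdef]; exact shEnt_eq_fent (fun ω => (U ω, X ω, S ω, Y ω)) hWm (fun w => (w.1, w.2.2.2))
  have HUS : shEnt (fun ω => (U ω, S ω)) = fent q (fun w : α × χ × γ × β => (w.1, w.2.2.1)) := by
    rw [hqdef]; exact shEnt_eq_fent (fun ω => (U ω, X ω, S ω, Y ω)) hWm (fun w => (w.1, w.2.2.1))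
  have HXS : shEnt (fun ω => (X ω, S ω)) = fent q (fun w : α × χ × γ × β => (w.2.1, w.2.2.1)) := by
    rw [hqdef]; exact shEnt_eq_fent (fun ω => (U ω, X ω, S ω, Y ω)) hWm (fun w => (w.2.1, w.2.2.1))
  have HYS : shEnt (fun ω => (Y ω, S ω)) = fent q (fun w : α × χ × γ × β => (w.2.2.2, w.2.2.1)) := by
    rw [hqdef]; exact shEnt_eq_fent (fun ω => (U ω, X ω, S ω, Y ω)) hWm (fun w => (w.2.2.2, w.2.2.1))
  have HXYS : shEnt (fun ω => (X ω, Y ω, S ω))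
      = fent q (fun w : α × χ × γ × β => (w.2.1, w.2.2.2, w.2.2.1)) := by
    rw [hqdef]
    exact shEnt_eq_fent (fun ω => (U ω, X ω, S ω, Y ω)) hWm (fun w => (w.2.1, w.2.2.2, w.2.2.1))
  -- nonnegativity of I(U;S|Y)
  have F1 : fent q (fun w : α × χ × γ × β => w.2.2.2)
        + fent q (fun w : α × χ × γ × β => (w.1, w.2.2.1, w.2.2.2))
      ≤ fent q (fun w : α × χ × γ × β => (w.1, w.2.2.2))
        + fent q (fun w : α × χ × γ × β => (w.2.2.1, w.2.2.2)) := by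
    rw [hqdef]
    exact cmi_nonneg' _ (fun w => ENNReal.toReal_nonneg)
      (fun w : α × χ × γ × β => w.1) (fun w : α × χ × γ × β => w.2.2.1)
      (fun w : α × χ × γ × β => w.2.2.2)
  -- nonnegativity of I(X;Y|U,S)
  have F2 : fent q (fun w : α × χ × γ × β => (w.1, w.2.2.1))
        + fent q (fun w : α × χ × γ × β => (w.2.1, w.2.2.2, (w.1, w.2.2.1)))
      ≤ fent q (fun w : α × χ × γ × β => (w.2.1, (w.1, w.2.2.1)))
        + fent q (fun w : α × χ × γ × β => (w.2.2.2, (w.1, w.2.2.1))) := by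
    rw [hqdef]
    exact cmi_nonneg' _ (fun w => ENNReal.toReal_nonneg)
      (fun w : α × χ × γ × β => w.2.1) (fun w : α × χ × γ × β => w.2.2.2)
      (fun w : α × χ × γ × β => (w.1, w.2.2.1))
  -- vanishing of I(U;Y|X,S) (Markov property)
  have F3 : fent q (fun w : α × χ × γ × β => (w.1, (w.2.1, w.2.2.1)))
        + fent q (fun w : α × χ × γ × β => (w.2.2.2, (w.2.1, w.2.2.1)))
      = fent q (fun w : α × χ × γ × β => (w.2.1, w.2.2.1))
        + fent q (fun w : α × χ × γ × β => (w.1, w.2.2.2, (w.2.1, w.2.2.1))) := by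
    rw [hqdef]
    refine cmi_eq_zero' _ (fun w => ENNReal.toReal_nonneg)
      (fun w : α × χ × γ × β => w.1) (fun w : α × χ × γ × β => w.2.2.2)
      (fun w : α × χ × γ × β => (w.2.1, w.2.2.1)) ?_
    rintro u y ⟨x, s⟩
    have m1 : (ℙ {ω | U ω = u ∧ X ω = x ∧ S ω = s ∧ Y ω = y}).toReal
        = ∑ w : α × χ × γ × β, if w.1 = u ∧ w.2.2.2 = y ∧ (w.2.1, w.2.2.1) = (x, s)
            then (ℙ ((fun ω => (U ω, X ω, S ω, Y ω)) ⁻¹' {w})).toReal else 0 := by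
      have hset : {ω | U ω = u ∧ X ω = x ∧ S ω = s ∧ Y ω = y}
          = (fun ω => (U ω, X ω, S ω, Y ω)) ⁻¹'
            {w : α × χ × γ × β | w.1 = u ∧ w.2.2.2 = y ∧ (w.2.1, w.2.2.1) = (x, s)} := by
        ext ω; simp only [Set.mem_setOf_eq, Set.mem_preimage, Prod.mk.injEq]; try tauto
      rw [hset]
      exact preim_prop_sum (fun ω => (U ω, X ω, S ω, Y ω)) hWm _
    have m2 : (ℙ {ω | X ω = x ∧ S ω = s}).toReal
        = ∑ w : α × χ × γ × β, if (w.2.1, w.2.2.1) = (x, s)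
            then (ℙ ((fun ω => (U ω, X ω, S ω, Y ω)) ⁻¹' {w})).toReal else 0 := by
      have hset : {ω | X ω = x ∧ S ω = s}
          = (fun ω => (U ω, X ω, S ω, Y ω)) ⁻¹'
            {w : α × χ × γ × β | (w.2.1, w.2.2.1) = (x, s)} := by
        ext ω; simp only [Set.mem_setOf_eq, Set.mem_preimage, Prod.mk.injEq]; try tauto
      rw [hset]
      exact preim_prop_sum (fun ω => (U ω, X ω, S ω, Y ω)) hWm _
    have m3 : (ℙ {ω | U ω = u ∧ X ω = x ∧ S ω = s}).toReal
        = ∑ w : α × χ × γ × β, if w.1 = u ∧ (w.2.1, w.2.2.1) = (x, s)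
            then (ℙ ((fun ω => (U ω, X ω, S ω, Y ω)) ⁻¹' {w})).toReal else 0 := by
      have hset : {ω | U ω = u ∧ X ω = x ∧ S ω = s}
          = (fun ω => (U ω, X ω, S ω, Y ω)) ⁻¹'
            {w : α × χ × γ × β | w.1 = u ∧ (w.2.1, w.2.2.1) = (x, s)} := by
        ext ω; simp only [Set.mem_setOf_eq, Set.mem_preimage, Prod.mk.injEq]; try tauto
      rw [hset]
      exact preim_prop_sum (fun ω => (U ω, X ω, S ω, Y ω)) hWm _
    have m4 : (ℙ {ω | Y ω = y ∧ X ω = x ∧ S ω = s}).toReal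
        = ∑ w : α × χ × γ × β, if w.2.2.2 = y ∧ (w.2.1, w.2.2.1) = (x, s)
            then (ℙ ((fun ω => (U ω, X ω, S ω, Y ω)) ⁻¹' {w})).toReal else 0 := by
      have hset : {ω | Y ω = y ∧ X ω = x ∧ S ω = s}
          = (fun ω => (U ω, X ω, S ω, Y ω)) ⁻¹'
            {w : α × χ × γ × β | w.2.2.2 = y ∧ (w.2.1, w.2.2.1) = (x, s)} := by
        ext ω; simp only [Set.mem_setOf_eq, Set.mem_preimage, Prod.mk.injEq]; try tauto
      rw [hset]
      exact preim_prop_sum (fun ω => (U ω, X ω, S ω, Y ω)) hWm _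
    rw [← m1, ← m2, ← m3, ← m4]
    exact hMarkov u x s y
  -- permutation identities
  have E1 : fent q (fun w : α × χ × γ × β => (w.2.2.2, w.2.2.1))
      = fent q (fun w : α × χ × γ × β => (w.2.2.1, w.2.2.2)) :=
    fent_comp_inj q (fun w => (w.2.2.1, w.2.2.2)) (fun p => (p.2, p.1))
      (fun _ _ hh => by simp_all [Prod.ext_iff])
  have E2 : fent q (fun w : α × χ × γ × β => (w.2.2.2, (w.2.1, w.2.2.1)))
      = fent q (fun w : α × χ × γ × β => (w.2.1, w.2.2.2, w.2.2.1)) :=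
    fent_comp_inj q (fun w => (w.2.1, w.2.2.2, w.2.2.1)) (fun p => (p.2.1, p.1, p.2.2))
      (fun _ _ hh => by simp_all [Prod.ext_iff])
  have E3 : fent q (fun w : α × χ × γ × β => (w.2.2.2, (w.1, w.2.2.1)))
      = fent q (fun w : α × χ × γ × β => (w.1, w.2.2.1, w.2.2.2)) :=
    fent_comp_inj q (fun w => (w.1, w.2.2.1, w.2.2.2)) (fun p => (p.2.2, p.1, p.2.1))
      (fun _ _ hh => by simp_all [Prod.ext_iff])
  have E4 : fent q (fun w : α × χ × γ × β => (w.1, w.2.2.2, (w.2.1, w.2.2.1)))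
      = fent q (fun w : α × χ × γ × β => (w.2.1, w.2.2.2, (w.1, w.2.2.1))) :=
    fent_comp_inj q (fun w => (w.2.1, w.2.2.2, (w.1, w.2.2.1)))
      (fun p => (p.2.2.1, p.2.1, p.1, p.2.2.2))
      (fun _ _ hh => by simp_all [Prod.ext_iff])
  have E5 : fent q (fun w : α × χ × γ × β => (w.2.1, (w.1, w.2.2.1)))
      = fent q (fun w : α × χ × γ × β => (w.1, w.2.1, w.2.2.1)) :=
    fent_comp_inj q (fun w => (w.1, w.2.1, w.2.2.1)) (fun p => (p.2.1, p.1, p.2.2))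
      (fun _ _ hh => by simp_all [Prod.ext_iff])
  have E6 : fent q (fun w : α × χ × γ × β => (w.1, (w.2.1, w.2.2.1)))
      = fent q (fun w : α × χ × γ × β => (w.1, w.2.1, w.2.2.1)) := rfl
  simp only [shMutualInfo, shCondMutualInfo]
  rw [HU, HY, HS, HUY, HUS, HXS, HYS, HXYS]
  linarith [F1, F2, F3, E1, E2, E3, E4, E5, E6]
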